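/- Let P_s be the set of Q-self-adjoint projections P of 𝔤 (P ∘ P = P) whose kernel is a non-toral subalgebra belonging to 𝒦 (equivalently, P = id_𝔤 − π_𝔨 for a non-toral 𝔨 ∈ 𝒦), and let X := {Σ_{i=1}^r λ_i·P_i : r ≥ 1, P_1, …, P_r ∈ P_s with ker P_1 ⊊ ⋯ ⊊ ker P_r, λ_i ≥ 0, Σ_{i=1}^r λ_i = 1}. Then every B ∈ X satisfies tr B > 0, and the map X → 𝕏 sending B to B/tr(B) is a homeomorphism of X onto the nerve 𝕏. -/

import Mathlib

open scoped RealInnerProductSpace Classical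
open Module Set Filter

/-- A Lie bracket on a real inner product space for which every adjoint map
`ad X : y ↦ ⁅X, y⁆` is skew-adjoint with respect to the inner product; this is the
Lie-algebraic model of a compact Lie group with a biinvariant metric. -/
structure CompactLieBracket (L : Type*) [NormedAddCommGroup L] [InnerProductSpace ℝ L] where
  br : L →ₗ[ℝ] L →ₗ[ℝ] L
  br_self : ∀ x : L, br x x = 0
  jacobi : ∀ x y z : L, br x (br y z) + br y (br z x) + br z (br x y) = 0
  skew : ∀ x y z : L, ⟪br x y, z⟫ = ⟪x, br y z⟫

variable {L : Type*} [NormedAddCommGroup L] [InnerProductSpace ℝ L] [FiniteDimensional ℝ L]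
variable (𝔩 : CompactLieBracket L) (H : Submodule ℝ L)

/-- `K` is a Lie subalgebra of `(L, 𝔩.br)`. -/
def IsLieSub (K : Submodule ℝ L) : Prop := ∀ x ∈ K, ∀ y ∈ K, 𝔩.br x y ∈ K

/-- `K` is an intermediate subalgebra: `𝔥 ⊊ 𝔨 ⊊ 𝔤`. -/
def IsIntermediate (K : Submodule ℝ L) : Prop := IsLieSub 𝔩 K ∧ H < K ∧ K < ⊤

/-- `K` is toral: `𝔪_𝔨 = 𝔨 ∩ 𝔪` is an abelian subalgebra of `𝔤` (where `𝔪 = 𝔥ᗮ`). -/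
def IsToral (K : Submodule ℝ L) : Prop := ∀ x ∈ K ⊓ Hᗮ, ∀ y ∈ K ⊓ Hᗮ, 𝔩.br x y = 0

/-- The orthogonal projection of `L` onto `K`, as an endomorphism of `L`. -/
noncomputable def projL (K : Submodule ℝ L) : L →L[ℝ] L :=
  K.subtypeL.comp K.orthogonalProjectionOnto

/-- The endomorphism `A^𝔨 = (dim 𝔤 - dim 𝔨)⁻¹ • (id - π_𝔨)`. -/
noncomputable def Apt (K : Submodule ℝ L) : L →L[ℝ] L :=
  ((finrank ℝ L : ℝ) - (finrank ℝ ↥K : ℝ))⁻¹ • (ContinuousLinearMap.id ℝ L - projL K)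

/-- A flag: a nonempty chain of subalgebras, each strictly containing `𝔥`. -/
def IsFlag (s : Finset (Submodule ℝ L)) : Prop :=
  s.Nonempty ∧ IsChain (· ≤ ·) (s : Set (Submodule ℝ L)) ∧ ∀ K ∈ s, IsLieSub 𝔩 K ∧ H < K

/-- The maximum `max φ` of a flag. -/
noncomputable def flagMax (s : Finset (Submodule ℝ L)) : Submodule ℝ L :=
  sSup (s : Set (Submodule ℝ L))

/-- The minimum (first member `𝔨₁`) of a flag. -/
noncomputable def flagMin (s : Finset (Submodule ℝ L)) : Submodule ℝ L :=
  sInf (s : Set (Submodule ℝ L))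

/-- The flag simplex `Δ_φ` of a (proper) flag. -/
noncomputable def flagSimplex (s : Finset (Submodule ℝ L)) : Set (L →L[ℝ] L) :=
  convexHull ℝ (Apt '' (↑s : Set (Submodule ℝ L)))

/-- The nerve `𝕏`: the union of the flag simplices of all proper non-toral flags. -/
noncomputable def nerve : Set (L →L[ℝ] L) :=
  ⋃ s ∈ { s : Finset (Submodule ℝ L) |
      IsFlag 𝔩 H s ∧ flagMax s ≠ ⊤ ∧ ¬ IsToral 𝔩 H (flagMin s) }, flagSimplex s
-- STATEMENT 12
/-- `P_s`: self-adjoint projections whose kernel is a non-toral intermediate subalgebra. -/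
def projSet : Set (L →L[ℝ] L) :=
  { P | (∀ x y : L, ⟪P x, y⟫ = ⟪x, P y⟫) ∧ P.comp P = P ∧
      ∃ K : Submodule ℝ L, IsIntermediate 𝔩 H K ∧ ¬ IsToral 𝔩 H K ∧ LinearMap.ker (P : L →ₗ[ℝ] L) = K }

/-- The unnormalized nerve `X`. -/
def nerveXun : Set (L →L[ℝ] L) :=
  { B | ∃ (r : ℕ) (P : Fin r → (L →L[ℝ] L)) (lam : Fin r → ℝ),
      1 ≤ r ∧ (∀ i, P i ∈ projSet 𝔩 H) ∧
      (∀ i j : Fin r, i < j → LinearMap.ker (P i : L →ₗ[ℝ] L) < LinearMap.ker (P j : L →ₗ[ℝ] L)) ∧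
      (∀ i, 0 ≤ lam i) ∧ (∑ i, lam i) = 1 ∧ B = ∑ i, lam i • P i }

/-! ### Auxiliary lemmas -/

section Aux

variable {𝔩} {H}

local notation "n" => finrank ℝ L

lemma projL_apply (K : Submodule ℝ L) (x : L) :
    projL K x = (K.orthogonalProjectionOnto x : L) := rfl

lemma projL_mem (K : Submodule ℝ L) (x : L) : projL K x ∈ K := (K.orthogonalProjectionOnto x).2

lemma projL_of_mem {K : Submodule ℝ L} {x : L} (hx : x ∈ K) : projL K x = x := by
  rw [projL_apply, ← Submodule.starProjection_apply, Submodule.starProjection_eq_self_iff]; exact hx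

lemma projL_of_mem_orthogonal {K : Submodule ℝ L} {x : L} (hx : x ∈ Kᗮ) : projL K x = 0 := by
  rw [projL_apply]
  rw [Submodule.orthogonalProjectionOnto_apply_of_mem_orthogonal hx]
  rfl

lemma sub_projL_mem_orthogonal (K : Submodule ℝ L) (x : L) : x - projL K x ∈ Kᗮ :=
  K.sub_starProjection_mem_orthogonal x

lemma projL_inner (K : Submodule ℝ L) (x y : L) : ⟪projL K x, y⟫ = ⟪x, projL K y⟫ :=
  Submodule.inner_starProjection_left_eq_right K x y

/-- `Pofk K = id - projL K`, the self-adjoint projection with kernel `K`. -/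
noncomputable def Pofk (K : Submodule ℝ L) : L →L[ℝ] L :=
  ContinuousLinearMap.id ℝ L - projL K

lemma Pofk_apply (K : Submodule ℝ L) (x : L) : Pofk K x = x - projL K x := rfl

lemma ker_Pofk (K : Submodule ℝ L) : LinearMap.ker (Pofk K : L →ₗ[ℝ] L) = K := by
  ext x
  simp only [LinearMap.mem_ker, ContinuousLinearMap.coe_coe, Pofk_apply, sub_eq_zero]
  constructor
  · intro h; rw [h]; exact projL_mem K x
  · intro h; rw [projL_of_mem h]

lemma Pofk_selfAdjoint (K : Submodule ℝ L) (x y : L) : ⟪Pofk K x, y⟫ = ⟪x, Pofk K y⟫ := by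
  simp only [Pofk_apply, inner_sub_left, inner_sub_right, projL_inner]

lemma Pofk_idem (K : Submodule ℝ L) : (Pofk K).comp (Pofk K) = Pofk K := by
  ext x
  simp only [ContinuousLinearMap.comp_apply, Pofk_apply, map_sub,
    projL_of_mem (projL_mem K x)]
  abel

lemma norm_Pofk_apply_le (K : Submodule ℝ L) (x : L) : ‖Pofk K x‖ ≤ ‖x‖ := by
  rw [Pofk_apply, projL_apply, ← Submodule.starProjection_apply,
    ← Submodule.starProjection_orthogonal_val, Submodule.starProjection_apply]
  calc ‖(Kᗮ.orthogonalProjectionOnto x : L)‖ ≤ ‖Kᗮ.orthogonalProjectionOnto‖ * ‖x‖ := by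
        simpa using (Kᗮ.orthogonalProjectionOnto).le_opNorm x
    _ ≤ 1 * ‖x‖ := by
        exact mul_le_mul_of_nonneg_right (Submodule.orthogonalProjectionOnto_norm_le _) (norm_nonneg x)
    _ = ‖x‖ := one_mul _

lemma trace_Pofk (K : Submodule ℝ L) :
    LinearMap.trace ℝ L ((Pofk K : L →L[ℝ] L) : L →ₗ[ℝ] L) = (n : ℝ) - (finrank ℝ K : ℝ) := by
  have hco : ((Pofk K : L →L[ℝ] L) : L →ₗ[ℝ] L)
      = LinearMap.id - (K.subtype ∘ₗ ((K.orthogonalProjectionOnto : L →L[ℝ] K) : L →ₗ[ℝ] K)) := by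
    ext x; rfl
  rw [hco, map_sub, LinearMap.trace_id]
  have h2 : ((K.orthogonalProjectionOnto : L →L[ℝ] K) : L →ₗ[ℝ] K) ∘ₗ K.subtype
      = LinearMap.id := by
    ext x
    simp [Submodule.orthogonalProjectionOnto_mem_subspace_eq_self]
  rw [LinearMap.trace_comp_comm', h2, LinearMap.trace_id]

/-- A self-adjoint idempotent is `Pofk` of its kernel. -/
lemma eq_Pofk_ker {P : L →L[ℝ] L} (hsa : ∀ x y : L, ⟪P x, y⟫ = ⟪x, P y⟫)
    (hidem : P.comp P = P) : P = Pofk (LinearMap.ker (P : L →ₗ[ℝ] L)) := by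
  set K := LinearMap.ker (P : L →ₗ[ℝ] L) with hK
  have hfix : ∀ v ∈ Kᗮ, P v = v := by
    intro v hv
    have h1 : v - P v ∈ K := by
      have := ContinuousLinearMap.ext_iff.1 hidem v
      simp only [ContinuousLinearMap.comp_apply] at this
      simp [hK, LinearMap.mem_ker, map_sub, this]
    have h2 : v - P v ∈ Kᗮ := by
      refine Submodule.sub_mem _ hv ?_
      rw [Submodule.mem_orthogonal]
      intro u hu
      rw [real_inner_comm, hsa]
      have : P u = 0 := hu
      rw [this, inner_zero_right]
    have h0 : v - P v = 0 := by
      have := (Submodule.orthogonal_disjoint K).le_bot ⟨h1, h2⟩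
      simpa using this
    exact (sub_eq_zero.1 h0).symm
  ext x
  have h1 : P (projL K x) = 0 := projL_mem K x
  have h2 : P (x - projL K x) = x - projL K x := hfix _ (sub_projL_mem_orthogonal K x)
  have h3 : P x = P (projL K x) + P (x - projL K x) := by rw [← map_add]; congr 1; abel
  rw [h3, h1, h2, zero_add]; rfl

end Aux
section Aux2

local notation "n" => finrank ℝ L

/-- Operator norm of a nonnegative combination of the projections `Pofk (K i)` where all
`K i` lie below a proper subspace. -/
lemma norm_sum_Pofk {r : ℕ} (K : Fin r → Submodule ℝ L) (a : Fin r → ℝ)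
    (ha : ∀ i, 0 ≤ a i) (Kmax : Submodule ℝ L) (hle : ∀ i, K i ≤ Kmax) (hKm : Kmax ≠ ⊤) :
    ‖∑ i, a i • Pofk (K i)‖ = ∑ i, a i := by
  have hsum_nonneg : 0 ≤ ∑ i, a i := Finset.sum_nonneg fun i _ => ha i
  apply le_antisymm
  · refine ContinuousLinearMap.opNorm_le_bound _ hsum_nonneg fun x => ?_
    calc ‖(∑ i, a i • Pofk (K i)) x‖ = ‖∑ i, a i • Pofk (K i) x‖ := by
          simp [ContinuousLinearMap.sum_apply]
      _ ≤ ∑ i, ‖a i • Pofk (K i) x‖ := norm_sum_le _ _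
      _ ≤ ∑ i, a i * ‖x‖ := by
          refine Finset.sum_le_sum fun i _ => ?_
          rw [norm_smul, Real.norm_eq_abs, abs_of_nonneg (ha i)]
          exact mul_le_mul_of_nonneg_left (norm_Pofk_apply_le _ _) (ha i)
      _ = (∑ i, a i) * ‖x‖ := by rw [← Finset.sum_mul]
  · have hbot : Kmaxᗮ ≠ ⊥ := by
      rw [Ne, Submodule.orthogonal_eq_bot_iff]; exact hKm
    obtain ⟨v, hv, hv0⟩ := Submodule.exists_mem_ne_zero_of_ne_bot hbot
    have happ : (∑ i, a i • Pofk (K i)) v = (∑ i, a i) • v := by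
      rw [ContinuousLinearMap.sum_apply, Finset.sum_smul]
      refine Finset.sum_congr rfl fun i _ => ?_
      have : projL (K i) v = 0 :=
        projL_of_mem_orthogonal (Submodule.orthogonal_le (hle i) hv)
      simp [ContinuousLinearMap.smul_apply, Pofk_apply, this]
    have := (∑ i, a i • Pofk (K i)).le_opNorm v
    rw [happ, norm_smul, Real.norm_eq_abs, abs_of_nonneg hsum_nonneg] at this
    have hv' : 0 < ‖v‖ := norm_pos_iff.2 hv0
    exact le_of_mul_le_mul_right this hv'

/-- Enumerate a finite chain of submodules strictly monotonically. -/
lemma chain_enum (s : Finset (Submodule ℝ L)) (hs : IsChain (· ≤ ·) (s : Set (Submodule ℝ L))) :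
    ∃ f : Fin s.card → Submodule ℝ L, StrictMono f ∧ Finset.image f Finset.univ = s := by
  letI : LinearOrder {x // x ∈ s} :=
    { Subtype.partialOrder _ with
      le_total := fun a b => hs.total a.2 b.2
      toDecidableLE := Classical.decRel _ }
  have hcard : Fintype.card {x // x ∈ s} = s.card := Fintype.card_coe s
  let e := monoEquivOfFin {x // x ∈ s} hcard
  refine ⟨fun i => (e i : Submodule ℝ L), fun i j hij => ?_, ?_⟩
  · exact Subtype.coe_lt_coe.2 (e.strictMono hij)
  · ext K
    simp only [Finset.mem_image, Finset.mem_univ, true_and]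
    constructor
    · rintro ⟨i, rfl⟩; exact (e i).2
    · intro hK; exact ⟨e.symm ⟨K, hK⟩, by simp⟩

end Aux2
section Main

local notation "n" => finrank ℝ L

lemma Apt_eq_smul_Pofk (K : Submodule ℝ L) :
    Apt K = ((n : ℝ) - (finrank ℝ K : ℝ))⁻¹ • Pofk K := rfl

lemma one_le_sub_finrank {K : Submodule ℝ L} (hK : K < ⊤) :
    (1 : ℝ) ≤ (n : ℝ) - (finrank ℝ K : ℝ) := by
  have h : finrank ℝ K + 1 ≤ n := Submodule.finrank_lt hK.ne
  have : ((finrank ℝ K : ℝ) + 1) ≤ (n : ℝ) := by exact_mod_cast h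
  linarith

lemma Xun_props {B : L →L[ℝ] L} (hB : B ∈ nerveXun 𝔩 H) :
    0 < LinearMap.trace ℝ L (B : L →ₗ[ℝ] L) ∧ ‖B‖ = 1 ∧
      (LinearMap.trace ℝ L (B : L →ₗ[ℝ] L))⁻¹ • B ∈ nerve 𝔩 H := by
  obtain ⟨r, P, lam, hr, hP, hker, hlam0, hlam1, hBe⟩ := hB
  set K : Fin r → Submodule ℝ L := fun i => LinearMap.ker (P i : L →ₗ[ℝ] L) with hKdef
  have hPeq : ∀ i, P i = Pofk (K i) := fun i => eq_Pofk_ker (hP i).1 (hP i).2.1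
  have hint : ∀ i, IsIntermediate 𝔩 H (K i) ∧ ¬ IsToral 𝔩 H (K i) := by
    intro i
    obtain ⟨-, -, K', h1, h2, h3⟩ := hP i
    have : K i = K' := h3
    rw [this]
    exact ⟨h1, h2⟩
  have hrpos : 0 < r := hr
  set i0 : Fin r := ⟨0, hrpos⟩ with hi0
  set iT : Fin r := ⟨r - 1, by omega⟩ with hiT
  have hle_of_le : ∀ i j : Fin r, i ≤ j → K i ≤ K j := by
    intro i j hij
    rcases lt_or_eq_of_le hij with h | h
    · exact (hker i j h).le
    · rw [h]
  have hleT : ∀ i, K i ≤ K iT := fun i =>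
    hle_of_le i iT (Fin.le_def.2 (by have := i.isLt; simp [hiT]; omega))
  have hge0 : ∀ i, K i0 ≤ K i := fun i => hle_of_le i0 i (Fin.le_def.2 (by simp [hi0]))
  have hKTne : K iT ≠ ⊤ := (hint iT).1.2.2.ne
  have hd : ∀ i, (1 : ℝ) ≤ (n : ℝ) - (finrank ℝ (K i) : ℝ) := fun i =>
    one_le_sub_finrank (hint i).1.2.2
  have hBe' : B = ∑ i, lam i • Pofk (K i) := by
    rw [hBe]; exact Finset.sum_congr rfl fun i _ => by rw [hPeq i]
  have hnorm : ‖B‖ = 1 := by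
    rw [hBe', norm_sum_Pofk K lam hlam0 (K iT) hleT hKTne, hlam1]
  have htr : LinearMap.trace ℝ L (B : L →ₗ[ℝ] L)
      = ∑ i, lam i * ((n : ℝ) - (finrank ℝ (K i) : ℝ)) := by
    have hcast : ((B : L →L[ℝ] L) : L →ₗ[ℝ] L)
        = ∑ i, lam i • ((Pofk (K i) : L →L[ℝ] L) : L →ₗ[ℝ] L) := by
      rw [hBe']
      rw [show ((∑ i, lam i • Pofk (K i) : L →L[ℝ] L) : L →ₗ[ℝ] L)
          = ContinuousLinearMap.coeLM ℝ (∑ i, lam i • Pofk (K i)) from rfl, map_sum]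
      simp only [map_smul]
      rfl
    rw [hcast, map_sum]
    simp only [map_smul, trace_Pofk, smul_eq_mul]
  have htrge : (1 : ℝ) ≤ LinearMap.trace ℝ L (B : L →ₗ[ℝ] L) := by
    rw [htr, ← hlam1]
    refine Finset.sum_le_sum fun i _ => ?_
    calc lam i = lam i * 1 := (mul_one _).symm
      _ ≤ lam i * ((n : ℝ) - (finrank ℝ (K i) : ℝ)) :=
        mul_le_mul_of_nonneg_left (hd i) (hlam0 i)
  have htrpos : 0 < LinearMap.trace ℝ L (B : L →ₗ[ℝ] L) := lt_of_lt_of_le one_pos htrge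
  refine ⟨htrpos, hnorm, ?_⟩
  set t := LinearMap.trace ℝ L (B : L →ₗ[ℝ] L) with hts
  set s : Finset (Submodule ℝ L) := Finset.image K Finset.univ with hsdef
  have hmemK : ∀ i, K i ∈ s := fun i => Finset.mem_image.2 ⟨i, Finset.mem_univ _, rfl⟩
  have hflag : IsFlag 𝔩 H s := by
    refine ⟨⟨K i0, hmemK i0⟩, ?_, ?_⟩
    · rintro x hx y hy hxy
      obtain ⟨i, -, rfl⟩ := Finset.mem_image.1 (Finset.mem_coe.1 hx)
      obtain ⟨j, -, rfl⟩ := Finset.mem_image.1 (Finset.mem_coe.1 hy)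
      rcases lt_trichotomy i j with h | h | h
      · exact Or.inl (hker i j h).le
      · exact absurd (congrArg K h) hxy
      · exact Or.inr (hker j i h).le
    · intro Kk hKk
      obtain ⟨i, -, rfl⟩ := Finset.mem_image.1 hKk
      exact ⟨(hint i).1.1, (hint i).1.2.1⟩
  have hmax : flagMax s ≠ ⊤ := by
    intro h
    apply hKTne
    have h1 : flagMax s ≤ K iT := by
      refine sSup_le ?_
      rintro x hx
      obtain ⟨i, -, rfl⟩ := Finset.mem_image.1 (Finset.mem_coe.1 hx)
      exact hleT i
    rw [h] at h1
    exact top_unique h1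
  have hminK : flagMin s = K i0 := by
    refine le_antisymm (sInf_le (Finset.mem_coe.2 (hmemK i0))) (le_sInf ?_)
    rintro b hb
    obtain ⟨i, -, rfl⟩ := Finset.mem_image.1 (Finset.mem_coe.1 hb)
    exact hge0 i
  have hmin : ¬ IsToral 𝔩 H (flagMin s) := by rw [hminK]; exact (hint i0).2
  set w : Fin r → ℝ := fun i => t⁻¹ * (lam i * ((n : ℝ) - (finrank ℝ (K i) : ℝ))) with hwdef
  have hw0 : ∀ i, 0 ≤ w i := fun i =>
    mul_nonneg (inv_nonneg.2 htrpos.le) (mul_nonneg (hlam0 i) (by linarith [hd i]))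
  have hw1 : ∑ i, w i = 1 := by
    rw [hwdef]
    simp only []
    rw [← Finset.mul_sum, ← htr, inv_mul_cancel₀ htrpos.ne']
  have hkey : ∑ i, w i • Apt (K i) = t⁻¹ • B := by
    rw [hBe', Finset.smul_sum]
    refine Finset.sum_congr rfl fun i _ => ?_
    rw [Apt_eq_smul_Pofk, smul_smul, smul_smul, hwdef]
    congr 1
    have hne0 : ((n : ℝ) - (finrank ℝ (K i) : ℝ)) ≠ 0 := by linarith [hd i]
    field_simp
  have hmem : t⁻¹ • B ∈ flagSimplex s := by
    have h := Finset.centerMass_mem_convexHull (Finset.univ : Finset (Fin r))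
      (fun i _ => hw0 i) (by rw [hw1]; exact one_pos)
      (fun i _ => Set.mem_image_of_mem Apt (Finset.mem_coe.2 (hmemK i)))
    rw [Finset.centerMass_eq_of_sum_1 _ _ hw1, hkey] at h
    exact h
  exact Set.mem_iUnion₂.2 ⟨s, ⟨hflag, hmax, hmin⟩, hmem⟩

lemma ker_Apt {K : Submodule ℝ L} (hK : K ≠ ⊤) : LinearMap.ker (Apt K : L →ₗ[ℝ] L) = K := by
  have hne0 : ((n : ℝ) - (finrank ℝ K : ℝ))⁻¹ ≠ 0 := by
    have := one_le_sub_finrank (lt_top_iff_ne_top.2 hK)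
    positivity
  ext x
  have hx : Apt K x = ((n : ℝ) - (finrank ℝ K : ℝ))⁻¹ • Pofk K x := rfl
  simp only [LinearMap.mem_ker, ContinuousLinearMap.coe_coe]
  constructor
  · intro h
    rw [hx, smul_eq_zero] at h
    have h2 : x ∈ LinearMap.ker (Pofk K : L →ₗ[ℝ] L) := by
      simpa [LinearMap.mem_ker] using h.resolve_left hne0
    rwa [ker_Pofk] at h2
  · intro h
    have h2 : x ∈ LinearMap.ker (Pofk K : L →ₗ[ℝ] L) := by rwa [ker_Pofk]
    have h3 : Pofk K x = 0 := by simpa [LinearMap.mem_ker] using h2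
    rw [hx, h3, smul_zero]

lemma nerve_props {C : L →L[ℝ] L} (hC : C ∈ nerve 𝔩 H) :
    LinearMap.trace ℝ L (C : L →ₗ[ℝ] L) = 1 ∧ 0 < ‖C‖ ∧ ‖C‖⁻¹ • C ∈ nerveXun 𝔩 H := by
  obtain ⟨s, hs, hCs⟩ := Set.mem_iUnion₂.1 hC
  obtain ⟨⟨hne, hchain, hflag⟩, hmax, hmin⟩ := hs
  have htop : ∀ K ∈ s, K ≠ ⊤ := by
    intro K hK h
    exact hmax (eq_top_iff.2 (h ▸ le_sSup (Finset.mem_coe.2 hK)))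
  have hd : ∀ K ∈ s, (1 : ℝ) ≤ (n : ℝ) - (finrank ℝ K : ℝ) := fun K hK =>
    one_le_sub_finrank (lt_top_iff_ne_top.2 (htop K hK))
  have hinj : ∀ K ∈ s, ∀ K' ∈ s, Apt K = Apt K' → K = K' := by
    intro K hK K' hK' h
    rw [← ker_Apt (htop K hK), ← ker_Apt (htop K' hK'), h]
  rw [flagSimplex, ← Finset.coe_image] at hCs
  obtain ⟨w, hw0, hw1, hwc⟩ := Finset.mem_convexHull.1 hCs
  rw [Finset.centerMass_eq_of_sum_1 _ _ hw1] at hwc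
  simp only [id_eq] at hwc
  rw [Finset.sum_image hinj] at hwc
  rw [Finset.sum_image hinj] at hw1
  obtain ⟨f, hmono, himg⟩ := chain_enum s hchain
  have hfinj : Function.Injective f := hmono.injective
  have hfs : ∀ i, f i ∈ s := fun i =>
    himg ▸ Finset.mem_image.2 ⟨i, Finset.mem_univ _, rfl⟩
  have hsum_f : ∀ g : Submodule ℝ L → (L →L[ℝ] L),
      ∑ K ∈ s, g K = ∑ i, g (f i) := by
    intro g
    conv_lhs => rw [← himg]
    rw [Finset.sum_image fun i _ j _ h => hfinj h]
  have hsum_f' : ∀ g : Submodule ℝ L → ℝ, ∑ K ∈ s, g K = ∑ i, g (f i) := by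
    intro g
    conv_lhs => rw [← himg]
    rw [Finset.sum_image fun i _ j _ h => hfinj h]
  have hr : 1 ≤ s.card := Finset.card_pos.2 hne
  set u : Fin s.card → ℝ := fun i => w (Apt (f i)) with hudef
  have hu0 : ∀ i, 0 ≤ u i := fun i =>
    hw0 _ (Finset.mem_image.2 ⟨f i, hfs i, rfl⟩)
  have hu1 : ∑ i, u i = 1 := by rw [hudef, ← hsum_f' fun K => w (Apt K), hw1]
  have hCe : C = ∑ i, u i • Apt (f i) := by
    rw [← hwc, hsum_f fun K => w (Apt K) • Apt K]
  set c : Fin s.card → ℝ := fun i => ((n : ℝ) - (finrank ℝ (f i) : ℝ))⁻¹ with hcdef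
  have hcpos : ∀ i, 0 < c i := fun i => by
    have := hd (f i) (hfs i); rw [hcdef]; positivity
  have hCe' : C = ∑ i, (u i * c i) • Pofk (f i) := by
    rw [hCe]
    exact Finset.sum_congr rfl fun i _ => by
      rw [Apt_eq_smul_Pofk, smul_smul]
  set S := ∑ i, u i * c i with hSdef
  have hS0 : ∀ i, 0 ≤ u i * c i := fun i => mul_nonneg (hu0 i) (hcpos i).le
  have hSpos : 0 < S := by
    rcases (Finset.sum_nonneg fun i _ => hS0 i).lt_or_eq with h | h
    · exact h
    · exfalso
      have hz := (Finset.sum_eq_zero_iff_of_nonneg fun i _ => hS0 i).1 h.symm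
      have : ∀ i, u i = 0 := fun i => by
        have := hz i (Finset.mem_univ i)
        exact (mul_eq_zero.1 this).resolve_right (hcpos i).ne'
      rw [Finset.sum_congr rfl fun i _ => this i] at hu1
      simpa using hu1
  have hnorm : ‖C‖ = S := by
    rw [hCe']
    refine norm_sum_Pofk f (fun i => u i * c i) hS0 (sSup (s : Set (Submodule ℝ L)))
      (fun i => le_sSup (Finset.mem_coe.2 (hfs i))) hmax
  have htr : LinearMap.trace ℝ L (C : L →ₗ[ℝ] L) = 1 := by
    have hcast : ((C : L →L[ℝ] L) : L →ₗ[ℝ] L)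
        = ∑ i, (u i * c i) • ((Pofk (f i) : L →L[ℝ] L) : L →ₗ[ℝ] L) := by
      rw [hCe']
      rw [show ((∑ i, (u i * c i) • Pofk (f i) : L →L[ℝ] L) : L →ₗ[ℝ] L)
          = ContinuousLinearMap.coeLM ℝ (∑ i, (u i * c i) • Pofk (f i)) from rfl, map_sum]
      simp only [map_smul]
      rfl
    rw [hcast, map_sum]
    simp only [map_smul, trace_Pofk, smul_eq_mul]
    rw [← hu1]
    refine Finset.sum_congr rfl fun i _ => ?_
    have hne0 : ((n : ℝ) - (finrank ℝ (f i) : ℝ)) ≠ 0 := by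
      have := hd (f i) (hfs i); linarith
    rw [hcdef]
    field_simp
  refine ⟨htr, by rw [hnorm]; exact hSpos, ?_⟩
  refine ⟨s.card, fun i => Pofk (f i), fun i => S⁻¹ * (u i * c i), hr, ?_, ?_, ?_, ?_, ?_⟩
  · intro i
    refine ⟨Pofk_selfAdjoint (f i), Pofk_idem (f i), f i, ?_, ?_, ker_Pofk (f i)⟩
    · exact ⟨(hflag _ (hfs i)).1, (hflag _ (hfs i)).2, lt_top_iff_ne_top.2 (htop _ (hfs i))⟩
    · intro htor
      apply hmin
      intro x hx y hy
      have hsub : flagMin s ≤ f i := sInf_le (Finset.mem_coe.2 (hfs i))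
      exact htor x ⟨hsub hx.1, hx.2⟩ y ⟨hsub hy.1, hy.2⟩
  · intro i j hij
    rw [ker_Pofk, ker_Pofk]
    exact hmono hij
  · exact fun i => mul_nonneg (inv_nonneg.2 hSpos.le) (hS0 i)
  · rw [← Finset.mul_sum, ← hSdef, inv_mul_cancel₀ hSpos.ne']
  · rw [hnorm, hCe', Finset.smul_sum]
    exact Finset.sum_congr rfl fun i _ => by rw [smul_smul]

end Main
theorem nerveXun_homeomorph_nerve
    (hH : IsLieSub 𝔩 H) (hprop : H ≠ ⊤) :
    (∀ B ∈ nerveXun 𝔩 H, 0 < LinearMap.trace ℝ L (B : L →ₗ[ℝ] L)) ∧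
    ∃ e : ↥(nerveXun 𝔩 H) ≃ₜ ↥(nerve 𝔩 H),
      ∀ B : ↥(nerveXun 𝔩 H),
        ((e B : ↥(nerve 𝔩 H)) : L →L[ℝ] L) =
          (LinearMap.trace ℝ L ((B : L →L[ℝ] L) : L →ₗ[ℝ] L))⁻¹ • (B : L →L[ℝ] L) := by
  refine ⟨fun B hB => (Xun_props 𝔩 H hB).1, ?_⟩
  have htrc : Continuous fun B : L →L[ℝ] L => LinearMap.trace ℝ L (B : L →ₗ[ℝ] L) :=
    LinearMap.continuous_of_finiteDimensional
      ((LinearMap.trace ℝ L).comp (ContinuousLinearMap.coeLM ℝ))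
  refine ⟨{ toFun := fun B =>
              ⟨(LinearMap.trace ℝ L ((B : L →L[ℝ] L) : L →ₗ[ℝ] L))⁻¹ • (B : L →L[ℝ] L),
               (Xun_props 𝔩 H B.2).2.2⟩
            invFun := fun C => ⟨‖(C : L →L[ℝ] L)‖⁻¹ • (C : L →L[ℝ] L),
               (nerve_props 𝔩 H C.2).2.2⟩
            left_inv := ?_
            right_inv := ?_
            continuous_toFun := ?_
            continuous_invFun := ?_ }, fun B => rfl⟩
  · intro B
    obtain ⟨hpos, hnorm, -⟩ := Xun_props 𝔩 H B.2
    apply Subtype.ext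
    set t := LinearMap.trace ℝ L ((B : L →L[ℝ] L) : L →ₗ[ℝ] L) with ht
    show ‖t⁻¹ • (B : L →L[ℝ] L)‖⁻¹ • (t⁻¹ • (B : L →L[ℝ] L)) = (B : L →L[ℝ] L)
    have h1 : ‖t⁻¹ • (B : L →L[ℝ] L)‖ = t⁻¹ := by
      rw [show ‖t⁻¹ • (B : L →L[ℝ] L)‖ = ‖t⁻¹‖ * ‖(B : L →L[ℝ] L)‖ from norm_smul (β := L →L[ℝ] L) t⁻¹ B,
        Real.norm_eq_abs, abs_of_pos (inv_pos.2 hpos), hnorm, mul_one]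
    rw [h1, smul_smul, inv_inv, mul_inv_cancel₀ hpos.ne', one_smul]
  · intro C
    obtain ⟨htr, hnpos, -⟩ := nerve_props 𝔩 H C.2
    apply Subtype.ext
    show (LinearMap.trace ℝ L
        ((‖(C : L →L[ℝ] L)‖⁻¹ • (C : L →L[ℝ] L) : L →L[ℝ] L) : L →ₗ[ℝ] L))⁻¹ •
        (‖(C : L →L[ℝ] L)‖⁻¹ • (C : L →L[ℝ] L)) = (C : L →L[ℝ] L)
    have hco : ((‖(C : L →L[ℝ] L)‖⁻¹ • (C : L →L[ℝ] L) : L →L[ℝ] L) : L →ₗ[ℝ] L)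
        = ‖(C : L →L[ℝ] L)‖⁻¹ • ((C : L →L[ℝ] L) : L →ₗ[ℝ] L) := rfl
    rw [hco, map_smul, htr, smul_eq_mul, mul_one, smul_smul, inv_inv,
      mul_inv_cancel₀ hnpos.ne', one_smul]
  · refine Continuous.subtype_mk ?_ _
    exact ((htrc.comp continuous_subtype_val).inv₀
      fun B => (Xun_props 𝔩 H B.2).1.ne').smul continuous_subtype_val
  · refine Continuous.subtype_mk ?_ _
    exact (((continuous_norm).comp continuous_subtype_val).inv₀
      fun C => (nerve_props 𝔩 H C.2).2.1.ne').smul continuous_subtype_val
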